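/- Validity of the progressive measurement-update step size: let γ₁, …, γ_L > 0 be weights and ℓ₁, …, ℓ_L > 0 be likelihood values with min_j ℓ_j < max_j ℓ_j, let R ∈ (0,1) satisfy R · (max_j γ_j)/(min_j γ_j) ≤ 1, and let λ > 0 satisfy λ ≤ log(R · (max_j γ_j)/(min_j γ_j)) / log((min_j ℓ_j)/(max_j ℓ_j)). Then the reweighted weights γ_j · ℓ_j^λ satisfy min_j (γ_j ℓ_j^λ) / max_j (γ_j ℓ_j^λ) ≥ R. -/
import Mathlib


/-- Validity of the progressive measurement-update step size: if the step size `λ`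
satisfies the bound from the progressive update, then the ratio of the smallest to the
largest reweighted weight stays above the threshold `R`. -/
theorem progressive_step_size_valid {ι : Type*} [Fintype ι] [Nonempty ι]
    (γ ℓ : ι → ℝ) (hγ : ∀ j, 0 < γ j) (hℓ : ∀ j, 0 < ℓ j)
    (hℓne : (⨅ j, ℓ j) < ⨆ j, ℓ j)
    (R : ℝ) (hR0 : 0 < R) (hR1 : R < 1)
    (hRbound : R * (⨆ j, γ j) / (⨅ j, γ j) ≤ 1)
    (lam : ℝ) (hlam0 : 0 < lam)
    (hlam : lam ≤ Real.log (R * (⨆ j, γ j) / (⨅ j, γ j)) /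
      Real.log ((⨅ j, ℓ j) / (⨆ j, ℓ j))) :
    R ≤ (⨅ j, γ j * ℓ j ^ lam) / (⨆ j, γ j * ℓ j ^ lam) := by
  set gm := ⨅ j, γ j with hgm
  set gM := ⨆ j, γ j with hgM
  set lm := ⨅ j, ℓ j with hlm
  set lM := ⨆ j, ℓ j with hlM
  obtain ⟨i0, hi0⟩ := Finite.exists_min γ
  obtain ⟨i2, hi2⟩ := Finite.exists_min ℓ
  have hgm_eq : gm = γ i0 :=
    le_antisymm (ciInf_le (Finite.bddBelow_range γ) i0) (le_ciInf hi0)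
  have hlm_eq : lm = ℓ i2 :=
    le_antisymm (ciInf_le (Finite.bddBelow_range ℓ) i2) (le_ciInf hi2)
  have hgm0 : 0 < gm := hgm_eq ▸ hγ i0
  have hlm0 : 0 < lm := hlm_eq ▸ hℓ i2
  have hgM0 : 0 < gM := lt_of_lt_of_le (hγ i0) (le_ciSup (Finite.bddAbove_range γ) i0)
  have hlM0 : 0 < lM := hlm0.trans hℓne
  -- the log of the likelihood ratio is negative
  have hB : Real.log (lm / lM) < 0 :=
    Real.log_neg (div_pos hlm0 hlM0) ((div_lt_one hlM0).2 hℓne)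
  have hA : Real.log (R * gM / gm) ≤ lam * Real.log (lm / lM) :=
    (le_div_iff_of_neg hB).mp hlam
  have hRgM0 : 0 < R * gM / gm := div_pos (mul_pos hR0 hgM0) hgm0
  have hkey : R * gM / gm ≤ (lm / lM) ^ lam := by
    have h1 : Real.log (R * gM / gm) ≤ Real.log ((lm / lM) ^ lam) := by
      rw [Real.log_rpow (div_pos hlm0 hlM0)]; exact hA
    exact (Real.log_le_log_iff hRgM0 (Real.rpow_pos_of_pos (div_pos hlm0 hlM0) lam)).mp h1
  have hrpow : (lm / lM) ^ lam = lm ^ lam / lM ^ lam :=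
    Real.div_rpow hlm0.le hlM0.le lam
  have hmain : R * (gM * lM ^ lam) ≤ gm * lm ^ lam := by
    rw [hrpow] at hkey
    have := (div_le_div_iff₀ hgm0 (Real.rpow_pos_of_pos hlM0 lam)).mp hkey
    nlinarith [Real.rpow_pos_of_pos hlM0 lam, Real.rpow_pos_of_pos hlm0 lam]
  -- bounds on the reweighted inf and sup
  have hinf : gm * lm ^ lam ≤ ⨅ j, γ j * ℓ j ^ lam := by
    refine le_ciInf fun j => ?_
    have h1 : gm ≤ γ j := ciInf_le (Finite.bddBelow_range γ) j
    have h2 : lm ^ lam ≤ ℓ j ^ lam :=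
      Real.rpow_le_rpow hlm0.le (ciInf_le (Finite.bddBelow_range ℓ) j) hlam0.le
    exact mul_le_mul h1 h2 (Real.rpow_pos_of_pos hlm0 lam).le (hγ j).le
  have hsup : (⨆ j, γ j * ℓ j ^ lam) ≤ gM * lM ^ lam := by
    refine ciSup_le fun j => ?_
    have h1 : γ j ≤ gM := le_ciSup (Finite.bddAbove_range γ) j
    have h2 : ℓ j ^ lam ≤ lM ^ lam :=
      Real.rpow_le_rpow (hℓ j).le (le_ciSup (Finite.bddAbove_range ℓ) j) hlam0.le
    exact mul_le_mul h1 h2 (Real.rpow_pos_of_pos (hℓ j) lam).le hgM0.le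
  have hsup0 : 0 < ⨆ j, γ j * ℓ j ^ lam :=
    lt_of_lt_of_le (mul_pos (hγ i0) (Real.rpow_pos_of_pos (hℓ i0) lam))
      (le_ciSup (Finite.bddAbove_range fun j => γ j * ℓ j ^ lam) i0)
  rw [le_div_iff₀ hsup0]
  calc R * (⨆ j, γ j * ℓ j ^ lam) ≤ R * (gM * lM ^ lam) := by
        exact mul_le_mul_of_nonneg_left hsup hR0.le
    _ ≤ gm * lm ^ lam := hmain
    _ ≤ _ := hinf
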